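/- Let p be a prime and let Δ_p = ℤ_p be the additive group of p-adic integers with its usual compact topology. Then Δ_p admits a dense subgroup D that is not Haar-measurable and satisfies |Δ_p/D| = 𝔠. -/

import Mathlib

open MeasureTheory Set Submodule

noncomputable section Stmt8Aux

/-- Index type: a well order of cardinality continuum whose initial segments are small. -/
abbrev II : Type := Cardinal.continuum.ord.ToType

/-- Transfinite recursion producing data satisfying a step-wise specification. -/
noncomputable def recF {Z : Type*} (Spec : II → (II → Z) → Z → Prop)
    (hex : ∀ α w, ∃ z, Spec α w z) (z₀ : Z) : II → Z :=
  WellFoundedLT.fix fun α prev =>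
    Classical.choose (hex α (fun β => if h : β < α then prev β h else z₀))

lemma recF_spec {Z : Type*} (Spec : II → (II → Z) → Z → Prop)
    (hex : ∀ α w, ∃ z, Spec α w z) (z₀ : Z) (α : II) :
    ∃ w : II → Z, (∀ β, β < α → w β = recF Spec hex z₀ β) ∧
      Spec α w (recF Spec hex z₀ α) := by
  refine ⟨fun β => if h : β < α then recF Spec hex z₀ β else z₀,
    fun β h => dif_pos h, ?_⟩
  have h : recF Spec hex z₀ α =
      Classical.choose (hex α (fun β => if h : β < α then recF Spec hex z₀ β else z₀)) :=
    WellFoundedLT.fix_eq _ α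
  rw [h]
  exact Classical.choose_spec _

/-- The set of coordinates produced before stage `α`. -/
def PSgen {p : ℕ} [Fact p.Prime] (α : II) (w : II → ℤ_[p] × ℤ_[p]) : Set ℚ_[p] :=
  ⋃ β ∈ Set.Iio α, {((w β).1 : ℚ_[p]), ((w β).2 : ℚ_[p])}

lemma PSgen_congr {p : ℕ} [Fact p.Prime] {α : II} {w w' : II → ℤ_[p] × ℤ_[p]}
    (h : ∀ β, β < α → w β = w' β) : PSgen α w = PSgen α w' := by
  unfold PSgen
  exact Set.iUnion₂_congr fun β hβ => by rw [h β hβ]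

lemma mk_span_lt {M : Type} [AddCommGroup M] [Module ℚ M] {s : Set M}
    (h : Cardinal.mk s < Cardinal.continuum) :
    Cardinal.mk (Submodule.span ℚ s : Set M) < Cardinal.continuum := by
  classical
  have h0 : Submodule.span ℚ (insert (0:M) s) = Submodule.span ℚ s :=
    Submodule.span_insert_zero
  have hne : (insert (0:M) s).Nonempty := ⟨0, mem_insert _ _⟩
  haveI : Nonempty (insert (0:M) s : Set M) := hne.to_subtype
  have hs' : Cardinal.mk (insert (0:M) s : Set M) < Cardinal.continuum :=
    lt_of_le_of_lt Cardinal.mk_insert_le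
      (Cardinal.add_lt_of_lt Cardinal.aleph0_le_continuum h
        (lt_of_lt_of_le Cardinal.one_lt_aleph0 Cardinal.aleph0_le_continuum))
  have key : (Submodule.span ℚ s : Set M) ⊆
      Set.range (fun l : ((insert (0:M) s : Set M) →₀ ℚ) =>
        Finsupp.linearCombination ℚ (fun x : (insert (0:M) s : Set M) => (x : M)) l) := by
    intro z hz
    have hz' : z ∈ Submodule.span ℚ (insert (0:M) s) := by rw [h0]; exact hz
    have hr : z ∈ LinearMap.range
        (Finsupp.linearCombination ℚ (fun x : (insert (0:M) s : Set M) => (x : M))) := by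
      rw [Finsupp.range_linearCombination, Subtype.range_coe]
      exact hz'
    obtain ⟨l, hl⟩ := hr
    exact ⟨l, hl⟩
  calc Cardinal.mk (Submodule.span ℚ s : Set M)
      ≤ Cardinal.mk (Set.range (fun l : ((insert (0:M) s : Set M) →₀ ℚ) =>
        Finsupp.linearCombination ℚ (fun x : (insert (0:M) s : Set M) => (x : M)) l)) :=
        Cardinal.mk_le_mk_of_subset key
    _ ≤ Cardinal.mk ((insert (0:M) s : Set M) →₀ ℚ) := Cardinal.mk_range_le
    _ = max (Cardinal.mk (insert (0:M) s : Set M)) (Cardinal.mk ℚ) :=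
        Cardinal.mk_finsupp_of_infinite' _ _
    _ < Cardinal.continuum := by
        rw [show Cardinal.mk ℚ = Cardinal.aleph0 from Cardinal.mk_denumerable ℚ]
        exact max_lt hs' Cardinal.aleph0_lt_continuum

end Stmt8Aux

theorem stmt8 (p : ℕ) [Fact p.Prime]
    [MeasurableSpace ℤ_[p]] [BorelSpace ℤ_[p]]
    (μ : Measure ℤ_[p]) [μ.IsAddHaarMeasure] (hμ : μ Set.univ = 1) :
    ∃ D : AddSubgroup ℤ_[p], Dense (D : Set ℤ_[p]) ∧
      ¬ NullMeasurableSet (D : Set ℤ_[p]) μ ∧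
      Cardinal.mk (ℤ_[p] ⧸ D) = Cardinal.continuum := by
  classical
  have hprime : p.Prime := Fact.out
  haveI : IsFiniteMeasure μ := ⟨by rw [hμ]; exact ENNReal.one_lt_top⟩
  haveI hnb : (nhdsWithin (0 : ℤ_[p]) {(0:ℤ_[p])}ᶜ).NeBot := by
    rw [← mem_closure_iff_nhdsWithin_neBot]
    have hlt : ‖(p : ℤ_[p])‖ < 1 := by
      rw [PadicInt.norm_p]
      apply inv_lt_one_of_one_lt₀
      exact_mod_cast hprime.one_lt
    have ht : Filter.Tendsto (fun n : ℕ => (p : ℤ_[p]) ^ n) Filter.atTop (nhds 0) :=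
      tendsto_pow_atTop_nhds_zero_of_norm_lt_one hlt
    refine mem_closure_of_tendsto ht (Filter.Eventually.of_forall fun n => ?_)
    simp only [Set.mem_compl_iff, Set.mem_singleton_iff]
    refine pow_ne_zero _ ?_
    exact_mod_cast hprime.ne_zero
  haveI : NullSingletonClass μ := by infer_instance
  -- cardinality facts
  have hcantor : Cardinal.mk (ℕ → Bool) = Cardinal.continuum := by
    rw [Cardinal.mk_arrow]
    simp [Cardinal.two_power_aleph0]
  have hZunc : ¬ Countable ℤ_[p] := by
    intro h
    have h0 : μ Set.univ = 0 := Set.countable_univ.measure_zero μ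
    rw [hμ] at h0
    simp at h0
  have hZeq : Cardinal.mk ℤ_[p] = Cardinal.continuum := by
    have e := PolishSpace.measurableEquivNatBoolOfNotCountable (α := ℤ_[p]) hZunc
    rw [e.toEquiv.cardinal_eq, hcantor]
  have hclosed_card : ∀ K : Set ℤ_[p], IsClosed K → 0 < μ K →
      Cardinal.continuum ≤ Cardinal.mk K := by
    intro K hK hKpos
    have hunc : ¬ K.Countable := by
      intro hc
      rw [hc.measure_zero μ] at hKpos
      exact lt_irrefl _ hKpos
    obtain ⟨j, hjr, -, hjinj⟩ := hK.exists_nat_bool_injection_of_not_countable hunc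
    have hinj : Function.Injective (fun b : ℕ → Bool => (⟨j b, hjr ⟨b, rfl⟩⟩ : K)) :=
      fun a b hab => hjinj (congrArg Subtype.val hab)
    calc Cardinal.continuum = Cardinal.mk (ℕ → Bool) := hcantor.symm
      _ ≤ Cardinal.mk K := Cardinal.mk_le_of_injective hinj
  -- the family of closed positive-measure sets
  haveI hKne : Nonempty {K : Set ℤ_[p] // IsClosed K ∧ 0 < μ K} :=
    ⟨⟨Set.univ, isClosed_univ, by rw [hμ]; norm_num⟩⟩
  have hKcard : Cardinal.mk {K : Set ℤ_[p] // IsClosed K ∧ 0 < μ K} ≤ Cardinal.continuum := by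
    obtain ⟨B, hBc, -, hB⟩ := TopologicalSpace.exists_countable_basis ℤ_[p]
    haveI : Countable ↥B := hBc.to_subtype
    have hinj : Function.Injective (fun K : {K : Set ℤ_[p] // IsClosed K ∧ 0 < μ K} =>
        {b : ↥B | (b : Set ℤ_[p]) ⊆ (K.1)ᶜ}) := by
      intro K1 K2 h
      have e1 := hB.open_eq_sUnion' K1.2.1.isOpen_compl
      have e2 := hB.open_eq_sUnion' K2.2.1.isOpen_compl
      have hset : {s | s ∈ B ∧ s ⊆ (K1.1)ᶜ} = {s | s ∈ B ∧ s ⊆ (K2.1)ᶜ} := by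
        ext s
        constructor
        · rintro ⟨hsB, hsub⟩
          exact ⟨hsB, (Set.ext_iff.mp h ⟨s, hsB⟩).mp hsub⟩
        · rintro ⟨hsB, hsub⟩
          exact ⟨hsB, (Set.ext_iff.mp h ⟨s, hsB⟩).mpr hsub⟩
      have hc : (K1.1)ᶜ = (K2.1)ᶜ := by rw [e1, e2, hset]
      exact Subtype.ext (compl_injective hc)
    calc Cardinal.mk {K : Set ℤ_[p] // IsClosed K ∧ 0 < μ K}
        ≤ Cardinal.mk (Set ↥B) := Cardinal.mk_le_of_injective hinj
      _ = 2 ^ Cardinal.mk ↥B := Cardinal.mk_set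
      _ ≤ 2 ^ Cardinal.aleph0 :=
          Cardinal.power_le_power_left two_ne_zero Cardinal.mk_le_aleph0
      _ = Cardinal.continuum := Cardinal.two_power_aleph0
  -- index type
  have hιcard : Cardinal.mk II = Cardinal.continuum := by
    rw [Cardinal.mk_toType, Cardinal.card_ord]
  haveI hιne : Nonempty II := by
    refine Ordinal.toType_nonempty_iff_ne_zero.mpr ?_
    intro h0
    have := Cardinal.card_ord Cardinal.continuum
    rw [h0] at this
    simp at this
    exact Cardinal.continuum_ne_zero this.symm
  obtain ⟨emb⟩ := Cardinal.le_def _ _ |>.mp (hKcard.trans_eq hιcard.symm)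
  set f : II → {K : Set ℤ_[p] // IsClosed K ∧ 0 < μ K} := Function.invFun emb with hfdef
  have hfsurj : Function.Surjective f := Function.invFun_surjective emb.injective
  -- cardinality of the accumulated sets
  have hPS_card : ∀ (α : II) (w : II → ℤ_[p] × ℤ_[p]),
      Cardinal.mk (PSgen α w) < Cardinal.continuum := by
    intro α w
    have hsub : PSgen α w ⊆ Set.range (fun x : ↥(Set.Iio α) × Bool =>
        if x.2 then ((w x.1).1 : ℚ_[p]) else ((w x.1).2 : ℚ_[p])) := by
      intro q hq
      simp only [PSgen, Set.mem_iUnion, Set.mem_insert_iff, Set.mem_singleton_iff,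
        exists_prop] at hq
      obtain ⟨β, hβ, hq⟩ := hq
      rcases hq with h | h
      · exact ⟨(⟨β, hβ⟩, true), h.symm⟩
      · exact ⟨(⟨β, hβ⟩, false), h.symm⟩
    calc Cardinal.mk (PSgen α w) ≤ Cardinal.mk (↥(Set.Iio α) × Bool) :=
          (Cardinal.mk_le_mk_of_subset hsub).trans Cardinal.mk_range_le
      _ = Cardinal.mk (Set.Iio α) * 2 := by rw [Cardinal.mk_prod]; simp
      _ < Cardinal.continuum := Cardinal.mul_lt_of_lt Cardinal.aleph0_le_continuum
          (Cardinal.mk_Iio_ord_toType α)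
          ((Cardinal.nat_lt_aleph0 2).trans Cardinal.aleph0_lt_continuum)
  -- the step-wise existence statement
  have hex : ∀ (α : II) (w : II → ℤ_[p] × ℤ_[p]), ∃ z : ℤ_[p] × ℤ_[p],
      z.1 ∈ (f α).1 ∧ ((z.1 : ℚ_[p]) ∉ span ℚ (PSgen α w)) ∧
        ((z.2 : ℚ_[p]) ∉ span ℚ (insert (z.1 : ℚ_[p]) (PSgen α w))) := by
    intro α w
    have h1 : ∃ x : ℤ_[p], x ∈ (f α).1 ∧ (x : ℚ_[p]) ∉ span ℚ (PSgen α w) := by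
      by_contra hcon
      push_neg at hcon
      have hKbig := hclosed_card (f α).1 (f α).2.1 (f α).2.2
      have hspan := mk_span_lt (hPS_card α w)
      have hinj : Function.Injective (fun k : ((f α).1 : Set ℤ_[p]) =>
          (⟨((k : ℤ_[p]) : ℚ_[p]), hcon (k : ℤ_[p]) k.2⟩ :
            (span ℚ (PSgen α w) : Set ℚ_[p]))) := by
        intro a b ha
        simp only [Subtype.mk.injEq] at ha
        exact Subtype.ext (Subtype.coe_injective ha)
      exact absurd (hKbig.trans (Cardinal.mk_le_of_injective hinj)) (not_le.mpr hspan)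
    obtain ⟨x, hxK, hxs⟩ := h1
    have h2 : ∃ e : ℤ_[p], (e : ℚ_[p]) ∉ span ℚ (insert (x : ℚ_[p]) (PSgen α w)) := by
      by_contra hcon
      push_neg at hcon
      have hins : Cardinal.mk (insert ((x : ℤ_[p]) : ℚ_[p]) (PSgen α w) : Set ℚ_[p]) <
          Cardinal.continuum :=
        lt_of_le_of_lt Cardinal.mk_insert_le
          (Cardinal.add_lt_of_lt Cardinal.aleph0_le_continuum (hPS_card α w)
            (lt_of_lt_of_le Cardinal.one_lt_aleph0 Cardinal.aleph0_le_continuum))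
      have hspan := mk_span_lt hins
      have hinj : Function.Injective (fun z : ℤ_[p] =>
          (⟨(z : ℚ_[p]), hcon z⟩ :
            (span ℚ (insert (x : ℚ_[p]) (PSgen α w)) : Set ℚ_[p]))) := by
        intro a b ha
        simp only [Subtype.mk.injEq] at ha
        exact Subtype.coe_injective ha
      have := (hZeq.symm.le.trans (Cardinal.mk_le_of_injective hinj))
      exact absurd this (not_le.mpr hspan)
    obtain ⟨e, he⟩ := h2
    exact ⟨(x, e), hxK, hxs, he⟩
  -- the transfinite recursion
  set Spec : II → (II → ℤ_[p] × ℤ_[p]) → ℤ_[p] × ℤ_[p] → Prop := fun α w z =>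
    z.1 ∈ (f α).1 ∧ ((z.1 : ℚ_[p]) ∉ span ℚ (PSgen α w)) ∧
      ((z.2 : ℚ_[p]) ∉ span ℚ (insert (z.1 : ℚ_[p]) (PSgen α w))) with hSpecdef
  set F : II → ℤ_[p] × ℤ_[p] := recF Spec hex (0, 0) with hFdef
  have hspec : ∀ α : II, (F α).1 ∈ (f α).1 ∧
      (((F α).1 : ℚ_[p]) ∉ span ℚ (PSgen α F)) ∧
      (((F α).2 : ℚ_[p]) ∉ span ℚ (insert ((F α).1 : ℚ_[p]) (PSgen α F))) := by
    intro α
    obtain ⟨w, hw, hsp⟩ := recF_spec Spec hex (0, 0) α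
    rw [← hFdef] at hsp hw
    simp only [hSpecdef] at hsp
    rwa [PSgen_congr hw] at hsp
  -- the sets T α of all coordinates up to stage α
  set T : II → Set ℚ_[p] := fun α =>
    ⋃ β ∈ Set.Iic α, {((F β).1 : ℚ_[p]), ((F β).2 : ℚ_[p])} with hTdef
  have hmemT1 : ∀ {γ α : II}, γ ≤ α → ((F γ).1 : ℚ_[p]) ∈ T α := by
    intro γ α h
    exact Set.mem_biUnion h (Set.mem_insert _ _)
  have hmemT2 : ∀ {γ α : II}, γ ≤ α → ((F γ).2 : ℚ_[p]) ∈ T α := by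
    intro γ α h
    exact Set.mem_biUnion h (by simp)
  have hTmono : ∀ {α β : II}, α ≤ β → T α ⊆ T β := by
    intro α β h
    exact Set.biUnion_subset_biUnion_left (Set.Iic_subset_Iic.mpr h)
  have hPrevT : ∀ α : II, PSgen α F = ⋃₀ ((fun β => T β) '' Set.Iio α) := by
    intro α
    ext q
    simp only [PSgen, hTdef, Set.mem_sUnion, Set.mem_image, Set.mem_iUnion,
      Set.mem_Iio, Set.mem_Iic, exists_prop]
    constructor
    · rintro ⟨β, hβ, hq⟩
      exact ⟨⋃ γ ∈ Set.Iic β, {((F γ).1 : ℚ_[p]), ((F γ).2 : ℚ_[p])}, ⟨β, hβ, rfl⟩,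
        by simp only [Set.mem_iUnion, Set.mem_Iic, exists_prop]; exact ⟨β, le_rfl, hq⟩⟩
    · rintro ⟨_, ⟨β, hβ, rfl⟩, hq⟩
      simp only [Set.mem_iUnion, Set.mem_Iic, exists_prop] at hq
      obtain ⟨γ, hγ, hq⟩ := hq
      exact ⟨γ, lt_of_le_of_lt hγ hβ, hq⟩
  -- linear independence of each T α
  have hTind : ∀ α : II, LinearIndependent ℚ ((↑) : ↥(T α) → ℚ_[p]) := by
    intro α₀
    refine WellFoundedLT.induction
      (motive := fun α => LinearIndependent ℚ ((↑) : ↥(T α) → ℚ_[p])) α₀ ?_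
    intro α IH
    have hdir : DirectedOn (· ⊆ ·) ((fun β => T β) '' Set.Iio α) := by
      rintro _ ⟨β₁, hβ₁, rfl⟩ _ ⟨β₂, hβ₂, rfl⟩
      exact ⟨T (max β₁ β₂), ⟨max β₁ β₂, Set.mem_Iio.mpr
          (max_lt (Set.mem_Iio.mp hβ₁) (Set.mem_Iio.mp hβ₂)), rfl⟩,
        hTmono (le_max_left _ _), hTmono (le_max_right _ _)⟩
    have hPrevInd : LinearIndependent ℚ ((↑) : ↥(PSgen α F) → ℚ_[p]) := by
      rw [hPrevT α]
      exact linearIndepOn_sUnion_of_directed (v := id) hdir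
        (by rintro a ⟨β, hβ, rfl⟩; exact IH β hβ)
    have h1 := LinearIndepOn.id_insert hPrevInd (hspec α).2.1
    have h2 := h1.id_insert (hspec α).2.2
    have hTeq : T α = insert ((F α).2 : ℚ_[p]) (insert ((F α).1 : ℚ_[p]) (PSgen α F)) := by
      ext q
      simp only [hTdef, PSgen, Set.mem_iUnion, Set.mem_insert_iff, Set.mem_singleton_iff,
        Set.mem_Iio, Set.mem_Iic, exists_prop]
      constructor
      · rintro ⟨β, hβ, hq⟩
        rcases lt_or_eq_of_le hβ with hlt | rfl
        · rcases hq with h | h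
          · exact Or.inr (Or.inr ⟨β, hlt, Or.inl h⟩)
          · exact Or.inr (Or.inr ⟨β, hlt, Or.inr h⟩)
        · tauto
      · rintro (h | h | ⟨β, hβ, h⟩)
        exacts [⟨α, le_rfl, Or.inr h⟩, ⟨α, le_rfl, Or.inl h⟩, ⟨β, hβ.le, h⟩]
    rw [hTeq]
    exact h2
  -- global linear independence
  set S : Set ℚ_[p] := ⋃₀ (Set.range T) with hSdef
  have hSind : LinearIndependent ℚ ((↑) : ↥S → ℚ_[p]) := by
    rw [hSdef]
    refine linearIndepOn_sUnion_of_directed (v := id) ?_ (by rintro a ⟨β, rfl⟩; exact hTind β)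
    rintro _ ⟨β₁, rfl⟩ _ ⟨β₂, rfl⟩
    exact ⟨T (max β₁ β₂), ⟨max β₁ β₂, rfl⟩,
      hTmono (le_max_left _ _), hTmono (le_max_right _ _)⟩
  -- membership of earlier coordinates
  have hmemPrev1 : ∀ {β α : II}, β < α → ((F β).1 : ℚ_[p]) ∈ PSgen α F := by
    intro β α h
    simp only [PSgen, Set.mem_iUnion, Set.mem_Iio, exists_prop]
    exact ⟨β, h, Or.inl rfl⟩
  have hmemPrev2 : ∀ {β α : II}, β < α → ((F β).2 : ℚ_[p]) ∈ PSgen α F := by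
    intro β α h
    simp only [PSgen, Set.mem_iUnion, Set.mem_Iio, exists_prop]
    exact ⟨β, h, Or.inr rfl⟩
  -- distinctness of coordinates
  have hne1 : ∀ {β α : II}, β < α →
      ((F α).1 : ℚ_[p]) ≠ ((F β).1 : ℚ_[p]) ∧ ((F α).1 : ℚ_[p]) ≠ ((F β).2 : ℚ_[p]) ∧
      ((F α).2 : ℚ_[p]) ≠ ((F β).1 : ℚ_[p]) ∧ ((F α).2 : ℚ_[p]) ≠ ((F β).2 : ℚ_[p]) := by
    intro β α h
    have h1 := (hspec α).2.1
    have h2 := (hspec α).2.2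
    have hm1 := hmemPrev1 h
    have hm2 := hmemPrev2 h
    exact ⟨fun he => h1 (by rw [he]; exact subset_span hm1),
      fun he => h1 (by rw [he]; exact subset_span hm2),
      fun he => h2 (by rw [he]; exact subset_span (Set.mem_insert_of_mem _ hm1)),
      fun he => h2 (by rw [he]; exact subset_span (Set.mem_insert_of_mem _ hm2))⟩
  have hne2 : ∀ α : II, ((F α).2 : ℚ_[p]) ≠ ((F α).1 : ℚ_[p]) := by
    intro α he
    exact (hspec α).2.2 (by rw [he]; exact subset_span (Set.mem_insert _ _))
  -- the set of x-coordinates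
  set A : Set ℚ_[p] := Set.range (fun α : II => ((F α).1 : ℚ_[p])) with hAdef
  have hAS : A ⊆ S := by
    rintro q ⟨α, rfl⟩
    exact ⟨T α, ⟨α, rfl⟩, hmemT1 le_rfl⟩
  have hceS : ∀ α : II, ((F α).2 : ℚ_[p]) ∈ S := fun α => ⟨T α, ⟨α, rfl⟩, hmemT2 le_rfl⟩
  have hkey : ∀ α : II, ((F α).2 : ℚ_[p]) ∉ span ℚ (S \ {((F α).2 : ℚ_[p])}) := by
    intro α
    have h := linearIndependent_iff_notMem_span.mp hSind ⟨((F α).2 : ℚ_[p]), hceS α⟩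
    have himg : ((↑) : ↥S → ℚ_[p]) '' (Set.univ \ {⟨((F α).2 : ℚ_[p]), hceS α⟩}) =
        S \ {((F α).2 : ℚ_[p])} := by
      ext q
      constructor
      · rintro ⟨⟨q', hq'⟩, ⟨-, hne⟩, rfl⟩
        refine ⟨hq', fun hq => hne ?_⟩
        simp only [Set.mem_singleton_iff] at hq ⊢
        exact Subtype.ext hq
      · rintro ⟨hqS, hne⟩
        refine ⟨⟨q, hqS⟩, ⟨trivial, fun hc => hne ?_⟩, rfl⟩
        simp only [Set.mem_singleton_iff] at hc ⊢
        exact congrArg Subtype.val hc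
    rwa [himg] at h
  have hsub1 : ∀ α : II, A ⊆ S \ {((F α).2 : ℚ_[p])} := by
    rintro α q ⟨γ, rfl⟩
    refine ⟨hAS ⟨γ, rfl⟩, ?_⟩
    simp only [Set.mem_singleton_iff]
    intro hq
    rcases lt_trichotomy γ α with hlt | rfl | hlt
    · exact (hne1 hlt).2.2.1 hq.symm
    · exact hne2 γ hq.symm
    · exact (hne1 hlt).2.1 hq
  have hbp : ∀ α : II, ((F α).2 : ℚ_[p]) ∉ span ℚ A :=
    fun α h => hkey α (span_mono (hsub1 α) h)
  have hbpp : ∀ {α β : II}, α ≠ β → ((F α).2 : ℚ_[p]) - ((F β).2 : ℚ_[p]) ∉ span ℚ A := by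
    intro α β hne hmem
    have heBne : ((F β).2 : ℚ_[p]) ≠ ((F α).2 : ℚ_[p]) := by
      rcases hne.lt_or_gt with h | h
      · exact (hne1 h).2.2.2
      · exact fun he => (hne1 h).2.2.2 he.symm
    have hins : ((F α).2 : ℚ_[p]) ∈ span ℚ (insert ((F β).2 : ℚ_[p]) A) := by
      have h1 : ((F β).2 : ℚ_[p]) ∈ span ℚ (insert ((F β).2 : ℚ_[p]) A) :=
        subset_span (Set.mem_insert _ _)
      have h2 : ((F α).2 : ℚ_[p]) - ((F β).2 : ℚ_[p]) ∈
          span ℚ (insert ((F β).2 : ℚ_[p]) A) :=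
        span_mono (Set.subset_insert _ _) hmem
      have h3 := Submodule.add_mem _ h1 h2
      have h4 : ((F β).2 : ℚ_[p]) + (((F α).2 : ℚ_[p]) - ((F β).2 : ℚ_[p])) =
          ((F α).2 : ℚ_[p]) := by ring
      rwa [h4] at h3
    have hsub2 : insert ((F β).2 : ℚ_[p]) A ⊆ S \ {((F α).2 : ℚ_[p])} := by
      intro q hq
      rcases hq with rfl | hq
      · exact ⟨hceS β, by simpa using heBne⟩
      · exact hsub1 α hq
    exact hkey α (span_mono hsub2 hins)
  -- the subgroup D
  set D : AddSubgroup ℤ_[p] := (Submodule.span ℚ A).toAddSubgroup.comap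
    (PadicInt.Coe.ringHom : ℤ_[p] →+* ℚ_[p]).toAddMonoidHom with hDdef
  have hmemD : ∀ z : ℤ_[p], z ∈ D ↔ (z : ℚ_[p]) ∈ span ℚ A := fun z => Iff.rfl
  have hxD : ∀ α : II, (F α).1 ∈ D := fun α => (hmemD _).mpr (subset_span ⟨α, rfl⟩)
  have hhit : ∀ K : Set ℤ_[p], IsClosed K → 0 < μ K → ∃ z : ℤ_[p], z ∈ D ∧ z ∈ K := by
    intro K h1 h2
    obtain ⟨α, hα⟩ := hfsurj ⟨K, h1, h2⟩
    refine ⟨(F α).1, hxD α, ?_⟩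
    have h3 := (hspec α).1
    rw [hα] at h3
    exact h3
  have hfull : ∀ Tm : Set ℤ_[p], MeasurableSet Tm → (D : Set ℤ_[p]) ⊆ Tm → μ Tm = 1 := by
    intro Tm hTm hsub
    by_contra hne'
    have hcompl : 0 < μ Tmᶜ := by
      by_contra h0
      push_neg at h0
      rw [le_zero_iff] at h0
      have h5 := measure_add_measure_compl (μ := μ) hTm
      rw [h0, add_zero, hμ] at h5
      exact hne' h5
    obtain ⟨K, hKsub, hKcl, hK⟩ :=
      hTm.compl.exists_isClosed_lt_add (measure_ne_top μ _) hcompl.ne'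
    have hKpos : 0 < μ K := by
      by_contra h0
      push_neg at h0
      rw [le_zero_iff] at h0
      rw [h0, zero_add] at hK
      exact lt_irrefl _ hK
    obtain ⟨z, hzD, hzK⟩ := hhit K hKcl hKpos
    exact hKsub hzK (hsub hzD)
  refine ⟨D, ?_, ?_, ?_⟩
  · -- density
    rw [dense_iff_inter_open]
    intro U hU hUne
    have hUpos : 0 < μ U := hU.measure_pos μ hUne
    obtain ⟨K, hKU, hKcl, hK⟩ :=
      hU.measurableSet.exists_isClosed_lt_add (measure_ne_top μ U) hUpos.ne'
    have hKpos : 0 < μ K := by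
      by_contra h0
      push_neg at h0
      rw [le_zero_iff] at h0
      rw [h0, zero_add] at hK
      exact lt_irrefl _ hK
    obtain ⟨z, hzD, hzK⟩ := hhit K hKcl hKpos
    exact ⟨z, hKU hzK, hzD⟩
  · -- non-null-measurability
    intro hNM
    obtain ⟨α₀⟩ := hιne
    have he₀ : (F α₀).2 ∉ D := fun h => hbp α₀ ((hmemD _).mp h)
    obtain ⟨Sm, hSsub, hSmeas, hSae⟩ := hNM.exists_measurable_subset_ae_eq
    have hdiff : μ ((D : Set ℤ_[p]) \ Sm) = 0 := (MeasureTheory.ae_eq_set.mp hSae).2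
    have hN0 : μ (toMeasurable μ ((D : Set ℤ_[p]) \ Sm)) = 0 := by
      rwa [measure_toMeasurable]
    have hSm1 : μ Sm = 1 := by
      have h1 : μ (Sm ∪ toMeasurable μ ((D : Set ℤ_[p]) \ Sm)) = 1 := by
        refine hfull _ (hSmeas.union (measurableSet_toMeasurable _ _)) ?_
        intro z hz
        by_cases hzs : z ∈ Sm
        · exact Or.inl hzs
        · exact Or.inr (subset_toMeasurable _ _ ⟨hz, hzs⟩)
      refine le_antisymm (by rw [← hμ]; exact measure_mono (Set.subset_univ _)) ?_
      calc (1 : ENNReal) = μ (Sm ∪ toMeasurable μ ((D : Set ℤ_[p]) \ Sm)) := h1.symm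
        _ ≤ μ Sm + μ (toMeasurable μ ((D : Set ℤ_[p]) \ Sm)) := measure_union_le _ _
        _ = μ Sm := by rw [hN0, add_zero]
    have hScompl : μ Smᶜ = 1 := by
      have hmeas' : MeasurableSet ((fun z : ℤ_[p] => (F α₀).2 + z) ⁻¹' Smᶜ) :=
        (measurable_const_add _) hSmeas.compl
      have hsub' : (D : Set ℤ_[p]) ⊆ (fun z : ℤ_[p] => (F α₀).2 + z) ⁻¹' Smᶜ := by
        intro z hz
        simp only [Set.mem_preimage, Set.mem_compl_iff]
        intro hmem
        have h2 : (F α₀).2 + z ∈ D := hSsub hmem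
        have h3 : (F α₀).2 ∈ D := by
          have h4 := AddSubgroup.sub_mem D h2 hz
          simpa using h4
        exact he₀ h3
      have h5 := hfull _ hmeas' hsub'
      rwa [measure_preimage_add] at h5
    have hsum := measure_add_measure_compl (μ := μ) hSmeas
    rw [hSm1, hScompl, hμ] at hsum
    norm_num at hsum
  · -- cardinality of the quotient
    refine le_antisymm ?_ ?_
    · calc Cardinal.mk (ℤ_[p] ⧸ D) ≤ Cardinal.mk ℤ_[p] :=
          Cardinal.mk_le_of_surjective (QuotientAddGroup.mk'_surjective D)
        _ = Cardinal.continuum := hZeq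
    · have hinj : Function.Injective (fun α : II => ((F α).2 : ℤ_[p] ⧸ D)) := by
        intro α β h
        by_contra hab
        refine hbpp hab ?_
        have hmem : (F α).2 - (F β).2 ∈ D := (QuotientAddGroup.eq_iff_sub_mem).mp h
        have h6 := (hmemD _).mp hmem
        rwa [PadicInt.coe_sub] at h6
      calc Cardinal.continuum = Cardinal.mk II := hιcard.symm
        _ ≤ Cardinal.mk (ℤ_[p] ⧸ D) := Cardinal.mk_le_of_injective hinj
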